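/- (Proposition 2, orientation invariance.) Let M be a real n × m matrix, N a real m × n matrix, and S an m × m diagonal matrix all of whose diagonal entries are 1 or −1 (encoding a change of orientation of some of the (k+1)-simplices, so that the reoriented coboundary is S·N and its dual is M·S). Then for every θ ∈ ℝⁿ and every α ∈ ℝ^{2m} satisfying α_j = α_{m+j} for all j < m, one has ((M·S)·V_mᵀ)⁻ · sin(V_m·(S·N)·θ + α) = (M·V_mᵀ)⁻ · sin(V_m·N·θ + α), where sin is applied entrywise. Hence the frustrated nonlinear coupling term of the simplicial Sakaguchi–Kuramoto model is independent of the orientation of the (k+1)-simplices. -/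

import Mathlib

open Matrix

/-- Entrywise negative part of a real matrix: `(X⁻)_{ij} = (X_{ij} − |X_{ij}|)/2`. -/
noncomputable def negPart {m n : Type*} (X : Matrix m n ℝ) : Matrix m n ℝ :=
  fun i j => (X i j - |X i j|) / 2

/-- The lift matrix `V_m`: the identity `I_m` stacked on top of `−I_m`. -/
def liftMat (m : ℕ) : Matrix (Fin m ⊕ Fin m) (Fin m) ℝ :=
  Matrix.fromRows 1 (-1)

lemma mul_liftT_inl {n m : ℕ} (X : Matrix (Fin n) (Fin m) ℝ) (i : Fin n) (j : Fin m) :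
    (X * (liftMat m)ᵀ) i (Sum.inl j) = X i j := by
  simp [Matrix.mul_apply, liftMat, Matrix.fromRows_apply_inl, Matrix.fromRows_apply_inr, Matrix.one_apply, eq_comm]

lemma mul_liftT_inr {n m : ℕ} (X : Matrix (Fin n) (Fin m) ℝ) (i : Fin n) (j : Fin m) :
    (X * (liftMat m)ᵀ) i (Sum.inr j) = -X i j := by
  simp [Matrix.mul_apply, liftMat, Matrix.fromRows_apply_inl, Matrix.fromRows_apply_inr, Matrix.one_apply, eq_comm]

lemma lift_mulVec_inl {m : ℕ} (w : Fin m → ℝ) (j : Fin m) :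
    (liftMat m *ᵥ w) (Sum.inl j) = w j := by
  simp [Matrix.mulVec, dotProduct, liftMat, Matrix.fromRows_apply_inl, Matrix.fromRows_apply_inr, Matrix.one_apply]

lemma lift_mulVec_inr {m : ℕ} (w : Fin m → ℝ) (j : Fin m) :
    (liftMat m *ᵥ w) (Sum.inr j) = -w j := by
  simp [Matrix.mulVec, dotProduct, liftMat, Matrix.fromRows_apply_inl, Matrix.fromRows_apply_inr, Matrix.one_apply,
    Finset.sum_neg_distrib]

/-- Proposition 2: the frustrated nonlinear coupling term of the simplicial
Sakaguchi–Kuramoto model is independent of the orientation of the `(k+1)`-simplices. -/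
theorem frustrated_coupling_orientation_invariant (n m : ℕ)
    (M : Matrix (Fin n) (Fin m) ℝ) (N : Matrix (Fin m) (Fin n) ℝ)
    (S : Matrix (Fin m) (Fin m) ℝ)
    (hSdiag : ∀ i j, i ≠ j → S i j = 0)
    (hSsign : ∀ j, S j j = 1 ∨ S j j = -1)
    (θ : Fin n → ℝ) (α : Fin m ⊕ Fin m → ℝ)
    (hα : ∀ j, α (Sum.inl j) = α (Sum.inr j)) :
    negPart ((M * S) * (liftMat m)ᵀ) *ᵥ
        (fun i => Real.sin ((liftMat m *ᵥ ((S * N) *ᵥ θ) + α) i)) =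
      negPart (M * (liftMat m)ᵀ) *ᵥ
        (fun i => Real.sin ((liftMat m *ᵥ (N *ᵥ θ) + α) i)) := by
  have hMS : ∀ i j, (M * S) i j = M i j * S j j := by
    intro i j
    rw [Matrix.mul_apply]
    exact Finset.sum_eq_single j (fun k _ hk => by rw [hSdiag k j hk, mul_zero])
      (fun h => absurd (Finset.mem_univ j) h)
  have hSN : ∀ j, ((S * N) *ᵥ θ) j = S j j * (N *ᵥ θ) j := by
    intro j
    rw [← Matrix.mulVec_mulVec]
    rw [Matrix.mulVec]
    unfold dotProduct
    exact Finset.sum_eq_single j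
      (fun k _ hk => by show S j k * _ = 0; rw [hSdiag j k (Ne.symm hk), zero_mul])
      (fun h => absurd (Finset.mem_univ j) h)
  funext i
  simp only [Matrix.mulVec, dotProduct]
  rw [Fintype.sum_sum_type, Fintype.sum_sum_type, ← Finset.sum_add_distrib,
    ← Finset.sum_add_distrib]
  apply Finset.sum_congr rfl
  intro j _
  unfold _root_.negPart
  simp only [mul_liftT_inl, mul_liftT_inr, Pi.add_apply, lift_mulVec_inl,
    lift_mulVec_inr, hMS, hSN, hα j]
  rcases hSsign j with h | h
  · simp [h]
  · simp only [h, mul_neg_one, neg_neg, neg_mul, neg_neg, ← neg_mul]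
    ring_nf
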